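/- On binary frames Xᵢ = {T,F}, for any subsets Aᵢ ⊆ Xᵢ (i = 1,…,n), the conjunctive combination on the product space satisfies Bel_{X₁×⋯×Xₙ}(A₁ × ⋯ × Aₙ) = ∏ᵢ Bel_{Xᵢ}(Aᵢ) (conditional conjunctive independence for Cartesian-product events). -/

import Mathlib

open Finset

/-- Conditional conjunctive independence on binary frames: for any subsets
`Aᵢ ⊆ Bool`, the belief of the Cartesian product `A₁ × ⋯ × Aₙ` under the
conjunctive combination on the product frame equals `∏ᵢ Belᵢ(Aᵢ)`. -/
theorem belief_product_factorisation_binary (n : ℕ) (m : Fin n → Finset Bool → ℝ)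
    (h0 : ∀ i, m i ∅ = 0) (hnn : ∀ i A, 0 ≤ m i A)
    (h1 : ∀ i, ∑ A : Finset Bool, m i A = 1)
    (A : Fin n → Finset Bool) :
    (∑ E ∈ (Fintype.piFinset A).powerset,
        ∑ B ∈ (Finset.univ : Finset (Fin n → Finset Bool)).filter
          (fun B => Fintype.piFinset B = E), ∏ i, m i (B i))
      = ∏ i, ∑ B ∈ (A i).powerset, m i B := by
  rw [Finset.sum_fiberwise_eq_sum_filter, Finset.prod_univ_sum]
  symm
  apply Finset.sum_subset
  · intro B hB
    simp only [Finset.mem_filter, Finset.mem_univ, Finset.mem_powerset, true_and,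
      Fintype.mem_piFinset, Finset.mem_powerset] at *
    exact Fintype.piFinset_subset _ _ hB
  · intro B hB hB'
    simp only [Finset.mem_filter, Finset.mem_univ, Finset.mem_powerset, true_and,
      Fintype.mem_piFinset, Finset.mem_powerset, not_forall] at hB hB'
    obtain ⟨i, hi⟩ := hB'
    -- some component must be empty
    have hempty : ∃ j, B j = ∅ := by
      by_contra hne
      push_neg at hne
      apply hi
      intro b hb
      have hgex : ∀ j, ∃ x, x ∈ B j := fun j =>
        (hne j).imp (fun _ h => h)
      choose g hg using hgex
      set f := Function.update g i b with hf
      have hfmem : ∀ j, f j ∈ B j := by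
        intro j
        by_cases h : j = i
        · subst h; simpa [hf] using hb
        · simpa [hf, Function.update_of_ne h] using hg j
      have := hB (by simpa [Fintype.mem_piFinset] using hfmem)
      rw [Fintype.mem_piFinset] at this
      have hfi : f i ∈ A i := this i
      simpa [hf] using hfi
    obtain ⟨j, hj⟩ := hempty
    exact Finset.prod_eq_zero (Finset.mem_univ j) (by rw [hj, h0])
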